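/- If b ≡ 120 (mod 330) is a positive integer, then there exists a v-palindrome in base b. In particular, the set of bases b ≥ 2 admitting a v-palindrome has positive natural density. -/
import Mathlib

/-- `v n` sums, over the prime factorization of `n`, each prime plus its
exponent when the exponent is at least `2` (primes with exponent `1`
contribute just the prime). -/
def v (n : ℕ) : ℕ :=
  ∑ p ∈ n.primeFactors, (p + if 2 ≤ n.factorization p then n.factorization p else 0)

/-- Base-`b` digit reversal. -/
def revDigits (b n : ℕ) : ℕ := Nat.ofDigits b (Nat.digits b n).reverse

/-- `n` is a v-palindrome in base `b`. -/
def IsVPalindrome (b n : ℕ) : Prop :=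
  ¬ b ∣ n ∧ n ≠ revDigits b n ∧ v n = v (revDigits b n)

lemma v_mul {m n : ℕ} (hm : m ≠ 0) (hn : n ≠ 0) (h : Nat.Coprime m n) :
    v (m * n) = v m + v n := by
  have hd : Disjoint m.primeFactors n.primeFactors :=
    Nat.Coprime.disjoint_primeFactors h
  have hfacm : ∀ p ∈ m.primeFactors, (m * n).factorization p = m.factorization p := by
    intro p hp
    have h2 : n.factorization p = 0 := by
      have hnot : p ∉ n.primeFactors := Finset.disjoint_left.mp hd hp
      rwa [← Nat.support_factorization, Finsupp.notMem_support_iff] at hnot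
    rw [Nat.factorization_mul hm hn]
    simp [h2]
  have hfacn : ∀ p ∈ n.primeFactors, (m * n).factorization p = n.factorization p := by
    intro p hp
    have h2 : m.factorization p = 0 := by
      have hnot : p ∉ m.primeFactors := Finset.disjoint_right.mp hd hp
      rwa [← Nat.support_factorization, Finsupp.notMem_support_iff] at hnot
    rw [Nat.factorization_mul hm hn]
    simp [h2]
  unfold v
  rw [Nat.Coprime.primeFactors_mul h, Finset.sum_union hd]
  congr 1
  · exact Finset.sum_congr rfl fun p hp => by rw [hfacm p hp]
  · exact Finset.sum_congr rfl fun p hp => by rw [hfacn p hp]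

lemma v_prime {p : ℕ} (hp : p.Prime) : v p = p := by
  unfold v
  rw [hp.primeFactors]
  simp [hp.factorization]

lemma exists_vpal (b : ℕ) (hmod : b % 330 = 120) : ∃ n : ℕ, IsVPalindrome b n := by
  obtain ⟨t, rfl⟩ : ∃ t, b = 330 * t + 120 := ⟨b / 330, by omega⟩
  set x : ℕ := 150 * t + 54 with hx
  set y : ℕ := 180 * t + 65 with hy
  set w : ℕ := (30 * t + 11) * (330 * t + 119) with hwdef
  refine ⟨y + (330 * t + 120) * x, ?_⟩
  set n : ℕ := y + (330 * t + 120) * x with hn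
  have hmodb : n % (330 * t + 120) = y := by
    rw [hn, Nat.add_mul_mod_self_left, Nat.mod_eq_of_lt (by omega)]
  have hdivb : n / (330 * t + 120) = x := by
    rw [hn, Nat.add_mul_div_left _ _ (by omega), Nat.div_eq_of_lt (by omega), zero_add]
  have hdig : Nat.digits (330 * t + 120) n = [y, x] := by
    rw [Nat.digits_def' (by omega : 1 < 330 * t + 120) (by omega : 0 < n), hmodb, hdivb,
      Nat.digits_def' (by omega : 1 < 330 * t + 120) (by omega : 0 < x),
      Nat.mod_eq_of_lt (by omega), Nat.div_eq_of_lt (by omega), Nat.digits_zero]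
  have hrev : revDigits (330 * t + 120) n = x + (330 * t + 120) * y := by
    rw [revDigits, hdig]
    simp [Nat.ofDigits]
  have hneq : n = 5 * w := by rw [hn, hx, hy, hwdef]; ring
  have hmeq : x + (330 * t + 120) * y = 6 * w := by rw [hx, hy, hwdef]; ring
  have hw0 : w ≠ 0 := by rw [hwdef]; positivity
  have hcop2 : Nat.Coprime 2 w := by
    rw [Nat.Prime.coprime_iff_not_dvd Nat.prime_two]
    intro hdvd
    rcases (Nat.Prime.dvd_mul Nat.prime_two).mp hdvd with h | h <;> omega
  have hcop3 : Nat.Coprime 3 w := by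
    rw [Nat.Prime.coprime_iff_not_dvd Nat.prime_three]
    intro hdvd
    rcases (Nat.Prime.dvd_mul Nat.prime_three).mp hdvd with h | h <;> omega
  have hcop5 : Nat.Coprime 5 w := by
    rw [Nat.Prime.coprime_iff_not_dvd (by norm_num : Nat.Prime 5)]
    intro hdvd
    rcases (Nat.Prime.dvd_mul (by norm_num : Nat.Prime 5)).mp hdvd with h | h <;> omega
  refine ⟨?_, ?_, ?_⟩
  · intro hdvd
    obtain ⟨k, hkk⟩ := hdvd
    rw [hkk, Nat.mul_mod_right] at hmodb
    omega
  · rw [hrev]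
    have hlt : n < x + (330 * t + 120) * y := by
      rw [hneq, hmeq]; omega
    exact hlt.ne
  · rw [hrev, hneq, hmeq]
    have h6 : (6 : ℕ) = 2 * 3 := rfl
    rw [show (6 : ℕ) * w = 2 * (3 * w) by ring]
    rw [v_mul (by norm_num) hw0 hcop5,
      v_mul (by norm_num) (Nat.mul_ne_zero (by norm_num) hw0)
        (Nat.Coprime.mul_right (by decide) hcop2),
      v_mul (by norm_num) hw0 hcop3,
      v_prime (by norm_num), v_prime Nat.prime_two, v_prime Nat.prime_three]
    omega

open scoped Classical in
theorem stmt_15 :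
    (∀ b : ℕ, 0 < b → b % 330 = 120 → ∃ n : ℕ, IsVPalindrome b n) ∧
    ∃ δ : ℝ, 0 < δ ∧ ∀ᶠ N : ℕ in Filter.atTop,
      δ * N ≤ ((Finset.range N).filter
        (fun b => 2 ≤ b ∧ ∃ n : ℕ, IsVPalindrome b n)).card := by
  constructor
  · intro b _ hmod; exact exists_vpal b hmod
  · refine ⟨1/1000, by norm_num, ?_⟩
    rw [Filter.eventually_atTop]
    refine ⟨2000, fun N hN => ?_⟩
    have hsub : (Finset.range (N / 660)).image (fun t => 330 * t + 120) ⊆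
        (Finset.range N).filter (fun b => 2 ≤ b ∧ ∃ n : ℕ, IsVPalindrome b n) := by
      intro b hb
      simp only [Finset.mem_image, Finset.mem_range] at hb
      obtain ⟨t, ht, rfl⟩ := hb
      simp only [Finset.mem_filter, Finset.mem_range]
      exact ⟨by omega, by omega, exists_vpal _ (by omega)⟩
    have hcard : N / 660 ≤ ((Finset.range N).filter
        (fun b => 2 ≤ b ∧ ∃ n : ℕ, IsVPalindrome b n)).card := by
      have := Finset.card_le_card hsub
      rwa [Finset.card_image_of_injective _ (fun a b h => by omega),
        Finset.card_range] at this
    have hk : N ≤ 660 * (N / 660) + 659 ∧ 2 ≤ N / 660 := by omega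
    have h1 : (1 / 1000 : ℝ) * N ≤ (N / 660 : ℕ) := by
      have hc1 : (N : ℝ) ≤ 660 * ((N / 660 : ℕ) : ℝ) + 659 := by exact_mod_cast hk.1
      have hc2 : (2 : ℝ) ≤ ((N / 660 : ℕ) : ℝ) := by exact_mod_cast hk.2
      linarith
    exact h1.trans (by exact_mod_cast hcard)
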